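/- Let n ≥ 2, let M be a universal n-linear order, let m ∈ {1, …, n}, and let g ∈ Aut(M). If there exist u, v ∈ M with u <_m v such that g a = a for every a with u <_m a and a <_m v, then g is the identity automorphism. -/
import Mathlib


/-- A set `M` equipped with `n` linear orders `<_1, …, <_n`. -/
structure NLinear (n : ℕ) (M : Type*) where
  lt : Fin n → M → M → Prop
  irrefl : ∀ i a, ¬ lt i a a
  trans : ∀ i a b c, lt i a b → lt i b c → lt i a c
  total : ∀ i a b, lt i a b ∨ a = b ∨ lt i b a

/-- `M` with its `n` linear orders is a universal `n`-linear order: it is countably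
infinite and has the one-point extension property. -/
structure IsUniversalNLinear (n : ℕ) (M : Type*) (L : NLinear n M) : Prop where
  countable : Countable M
  infinite : Infinite M
  extension : ∀ (A : Finset M) (D : Fin n → Set M),
    (∀ i, D i ⊆ ↑A) →
    (∀ i, ∀ a ∈ A, ∀ b ∈ A, L.lt i a b → b ∈ D i → a ∈ D i) →
    ∃ x, x ∉ A ∧ ∀ i, ∀ a ∈ A, (L.lt i a x ↔ a ∈ D i)

/-- The automorphism group of an `n`-linearly ordered set, as a subgroup of `Equiv.Perm M`. -/
def NLinear.aut {n : ℕ} {M : Type*} (L : NLinear n M) : Subgroup (Equiv.Perm M) where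
  carrier := {g | ∀ i a b, L.lt i a b ↔ L.lt i (g a) (g b)}
  one_mem' := fun _ _ _ => Iff.rfl
  mul_mem' := by
    intro g h hg hh i a b
    exact (hh i a b).trans (hg i (h a) (h b))
  inv_mem' := by
    intro g hg i a b
    simpa using (hg i (g⁻¹ a) (g⁻¹ b)).symm

/-- `f` has a single `+`-orbital with respect to `<_m`. -/
def NLinear.SinglePlus {n : ℕ} {M : Type*} (L : NLinear n M) (m : Fin n)
    (f : Equiv.Perm M) : Prop :=
  ∃ a : M, L.lt m a (f a) ∧ (∀ x : M, ∃ k : ℤ, L.lt m x ((f ^ k) a)) ∧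
    (∀ x : M, ∃ k : ℤ, L.lt m ((f ^ k) a) x)

/-- `f` has a single `−`-orbital with respect to `<_m`. -/
def NLinear.SingleMinus {n : ℕ} {M : Type*} (L : NLinear n M) (m : Fin n)
    (f : Equiv.Perm M) : Prop :=
  ∃ a : M, L.lt m (f a) a ∧ (∀ x : M, ∃ k : ℤ, L.lt m x ((f ^ k) a)) ∧
    (∀ x : M, ∃ k : ℤ, L.lt m ((f ^ k) a) x)

/-- `f` has a `+`-orbital unbounded above with respect to `<_m`. -/
def NLinear.PlusUnbAbove {n : ℕ} {M : Type*} (L : NLinear n M) (m : Fin n)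
    (f : Equiv.Perm M) : Prop :=
  ∃ a : M, L.lt m a (f a) ∧ ∀ x : M, ∃ k : ℤ, L.lt m x ((f ^ k) a)

/-- `f` has a `−`-orbital unbounded below with respect to `<_m`. -/
def NLinear.MinusUnbBelow {n : ℕ} {M : Type*} (L : NLinear n M) (m : Fin n)
    (f : Equiv.Perm M) : Prop :=
  ∃ b : M, L.lt m (f b) b ∧ ∀ x : M, ∃ k : ℤ, L.lt m ((f ^ k) b) x


lemma key_ext {n : ℕ} {M : Type*} (L : NLinear n M)
    (hL : IsUniversalNLinear n M L) {m i : Fin n} (him : i ≠ m)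
    (u v p q : M) (huv : L.lt m u v) (hpq : L.lt i p q) :
    ∃ w, L.lt m u w ∧ L.lt m w v ∧ L.lt i p w ∧ L.lt i w q := by
  classical
  set A : Finset M := {u, v, p, q} with hA
  set D : Fin n → Set M :=
    fun j => if j = m then {a | a ∈ A ∧ L.lt m a v}
      else if j = i then {a | a ∈ A ∧ L.lt i a q} else ∅ with hD
  have hsub : ∀ j, D j ⊆ ↑A := by
    intro j a ha
    simp only [hD] at ha
    split_ifs at ha with h h
    · exact Finset.mem_coe.mpr ha.1
    · exact Finset.mem_coe.mpr ha.1
    · exact absurd ha (Set.notMem_empty a)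
  have hdc : ∀ j, ∀ a ∈ A, ∀ b ∈ A, L.lt j a b → b ∈ D j → a ∈ D j := by
    intro j a haA b hbA hab hb
    simp only [hD] at hb ⊢
    split_ifs at hb ⊢ with h h
    · subst h; exact ⟨haA, L.trans _ _ _ _ hab hb.2⟩
    · subst h; exact ⟨haA, L.trans _ _ _ _ hab hb.2⟩
    · exact absurd hb (Set.notMem_empty b)
  obtain ⟨w, hwA, hw⟩ := hL.extension A D hsub hdc
  have huA : u ∈ A := by simp [hA]
  have hvA : v ∈ A := by simp [hA]
  have hpA : p ∈ A := by simp [hA]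
  have hqA : q ∈ A := by simp [hA]
  have huw : L.lt m u w := by
    refine (hw m u huA).mpr ?_
    simp only [hD, if_pos rfl]
    exact ⟨huA, huv⟩
  have hwv : L.lt m w v := by
    have hnv : ¬ L.lt m v w := by
      intro hvw
      have := (hw m v hvA).mp hvw
      simp only [hD, if_pos rfl] at this
      exact L.irrefl m v this.2
    rcases L.total m w v with h | h | h
    · exact h
    · exact absurd (h ▸ hwA) (fun hh => hh hvA)
    · exact absurd h hnv
  have hpw : L.lt i p w := by
    refine (hw i p hpA).mpr ?_
    simp only [hD, if_neg him, if_pos rfl]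
    exact ⟨hpA, hpq⟩
  have hwq : L.lt i w q := by
    have hnq : ¬ L.lt i q w := by
      intro hqw
      have := (hw i q hqA).mp hqw
      simp only [hD, if_neg him, if_pos rfl] at this
      exact L.irrefl i q this.2
    rcases L.total i w q with h | h | h
    · exact h
    · exact absurd (h ▸ hwA) (fun hh => hh hqA)
    · exact absurd h hnq
  exact ⟨w, huw, hwv, hpw, hwq⟩

/-- For `n ≥ 2`, if an automorphism `g` of a universal `n`-linear
order fixes every point of a nonempty open `<_m`-interval `(u, v)`, then `g` is the
identity. -/
theorem stmt12 {n : ℕ} (hn : 2 ≤ n) {M : Type*} (L : NLinear n M)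
    (hL : IsUniversalNLinear n M L) (m : Fin n) (g : L.aut)
    (u v : M) (huv : L.lt m u v)
    (hfix : ∀ a : M, L.lt m u a → L.lt m a v → (g : Equiv.Perm M) a = a) :
    g = 1 := by
  classical
  have hg : ∀ i a b, L.lt i a b ↔ L.lt i ((g : Equiv.Perm M) a) ((g : Equiv.Perm M) b) := g.2
  haveI : Nontrivial (Fin n) := Fin.nontrivial_iff_two_le.mpr hn
  obtain ⟨i, him⟩ : ∃ i : Fin n, i ≠ m := exists_ne m
  apply Subtype.ext
  apply Equiv.ext
  intro x
  show (g : Equiv.Perm M) x = x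
  by_contra hx
  rcases L.total i x ((g : Equiv.Perm M) x) with h1 | h1 | h1
  · obtain ⟨w, huw, hwv, hpw, hwq⟩ := key_ext L hL him u v x ((g : Equiv.Perm M) x) huv h1
    have hgw : (g : Equiv.Perm M) w = w := hfix w huw hwv
    have := (hg i x w).mp hpw
    rw [hgw] at this
    exact L.irrefl i w (L.trans _ _ _ _ hwq this)
  · exact hx h1.symm
  · obtain ⟨w, huw, hwv, hpw, hwq⟩ := key_ext L hL him u v ((g : Equiv.Perm M) x) x huv h1
    have hgw : (g : Equiv.Perm M) w = w := hfix w huw hwv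
    have := (hg i w x).mp hwq
    rw [hgw] at this
    exact L.irrefl i w (L.trans _ _ _ _ this hpw)
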